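/- Let N ≥ 1, p > 1, κ ≥ 0 and ν > 0, and let Ψ : ℝ^N → ℝ be a function such that Ψ − ν Ψ_{p,κ} is convex on ℝ^N. Then Ψ is strictly convex on ℝ^N. -/

import Mathlib

open Filter Topology

/-- The function `Ψ_{p,κ}(ξ) = (1/p) * ((κ² + |ξ|²)^(p/2) - κ^p)`. -/
noncomputable def PsiPK (N : ℕ) (p κ : ℝ) (ξ : EuclideanSpace ℝ (Fin N)) : ℝ :=
  (1 / p) * ((κ ^ 2 + ‖ξ‖ ^ 2) ^ (p / 2) - κ ^ p)

section aux

variable {N : ℕ} {p κ : ℝ}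

/-- The embedding `ξ ↦ (κ, ξ)` into `ℝ^{N+1}`. -/
noncomputable def auxA (N : ℕ) (κ : ℝ) (ξ : EuclideanSpace ℝ (Fin N)) :
    EuclideanSpace ℝ (Fin (N + 1)) :=
  WithLp.toLp 2 (Fin.cons κ ξ.ofLp : Fin (N + 1) → ℝ)

lemma auxA_norm_sq (x : EuclideanSpace ℝ (Fin N)) :
    ‖auxA N κ x‖ ^ 2 = κ ^ 2 + ‖x‖ ^ 2 := by
  have h1 : ‖auxA N κ x‖ = Real.sqrt (∑ i, ‖auxA N κ x i‖ ^ 2) :=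
    EuclideanSpace.norm_eq _
  have h2 : ‖x‖ = Real.sqrt (∑ i, ‖x i‖ ^ 2) := EuclideanSpace.norm_eq _
  rw [h1, h2, Real.sq_sqrt (by positivity), Real.sq_sqrt (by positivity)]
  rw [Fin.sum_univ_succ]
  simp [auxA]

lemma auxA_norm_nonneg_kappa (hκ : 0 ≤ κ) (x : EuclideanSpace ℝ (Fin N)) :
    κ ≤ ‖auxA N κ x‖ := by
  have := auxA_norm_sq (κ := κ) x
  nlinarith [norm_nonneg (auxA N κ x), sq_nonneg ‖x‖]

lemma auxA_affine (a b : ℝ) (hab : a + b = 1) (x y : EuclideanSpace ℝ (Fin N)) :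
    auxA N κ (a • x + b • y) = a • auxA N κ x + b • auxA N κ y := by
  ext i
  refine Fin.cases ?_ (fun j => ?_) i
  · show κ = a * κ + b * κ
    rw [← add_mul, hab, one_mul]
  · show (a • x + b • y) j = a * (auxA N κ x) j.succ + b * (auxA N κ y) j.succ
    simp [auxA]

lemma auxA_inj (x y : EuclideanSpace ℝ (Fin N)) (h : auxA N κ x = auxA N κ y) : x = y := by
  ext j
  have := congrFun (congrArg WithLp.ofLp h) j.succ
  simpa [auxA] using this

lemma strictConvexOn_F (hp : 1 < p) (hκ : 0 ≤ κ) :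
    StrictConvexOn ℝ Set.univ (fun ξ : EuclideanSpace ℝ (Fin N) =>
      (κ ^ 2 + ‖ξ‖ ^ 2) ^ (p / 2)) := by
  have key : ∀ ξ : EuclideanSpace ℝ (Fin N),
      (κ ^ 2 + ‖ξ‖ ^ 2) ^ (p / 2) = ‖auxA N κ ξ‖ ^ p := by
    intro ξ
    rw [← auxA_norm_sq (κ := κ) ξ, ← Real.rpow_natCast ‖auxA N κ ξ‖ 2,
      ← Real.rpow_mul (norm_nonneg _)]
    congr 1
    push_cast
    ring
  refine ⟨convex_univ, fun x _ y _ hxy a b ha hb hab => ?_⟩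
  simp only [key]
  set u := auxA N κ x with hu
  set v := auxA N κ y with hv
  have huv : u ≠ v := fun h => hxy (auxA_inj x y h)
  have hmid : auxA N κ (a • x + b • y) = a • u + b • v := auxA_affine a b hab x y
  rw [hmid]
  have hm : ‖a • u + b • v‖ ≤ a * ‖u‖ + b * ‖v‖ := by
    calc ‖a • u + b • v‖ ≤ ‖a • u‖ + ‖b • v‖ := norm_add_le _ _
      _ = a * ‖u‖ + b * ‖v‖ := by
          rw [norm_smul, norm_smul, Real.norm_of_nonneg ha.le, Real.norm_of_nonneg hb.le]
  rcases eq_or_ne ‖u‖ ‖v‖ with heq | hne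
  · -- equal norms: use strict convexity of the Euclidean norm
    have hlt : ‖a • u + b • v‖ < ‖u‖ :=
      norm_combo_lt_of_ne le_rfl heq.ge huv ha hb hab
    have hu0 : 0 < ‖u‖ := lt_of_le_of_lt (norm_nonneg _) hlt
    have : ‖a • u + b • v‖ ^ p < ‖u‖ ^ p :=
      Real.rpow_lt_rpow (norm_nonneg _) hlt (lt_trans one_pos hp)
    calc ‖a • u + b • v‖ ^ p < ‖u‖ ^ p := this
      _ = a * ‖u‖ ^ p + b * ‖v‖ ^ p := by rw [← heq, ← add_mul, hab, one_mul]
  · have h1 : ‖a • u + b • v‖ ^ p ≤ (a * ‖u‖ + b * ‖v‖) ^ p :=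
      Real.rpow_le_rpow (norm_nonneg _) hm (by linarith)
    have h2 : (a * ‖u‖ + b * ‖v‖) ^ p < a * ‖u‖ ^ p + b * ‖v‖ ^ p := by
      have := (strictConvexOn_rpow hp).2 (Set.mem_Ici.2 (norm_nonneg u))
        (Set.mem_Ici.2 (norm_nonneg v)) hne ha hb hab
      simpa [smul_eq_mul] using this
    exact lt_of_le_of_lt h1 h2

end aux

/-- If `Ψ - ν Ψ_{p,κ}` is convex with `ν > 0`, then `Ψ` is strictly
convex. -/
theorem stmt_4 (N : ℕ) (hN : 1 ≤ N) (p κ ν : ℝ) (hp : 1 < p) (hκ : 0 ≤ κ) (hν : 0 < ν)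
    (Ψ : EuclideanSpace ℝ (Fin N) → ℝ)
    (hconv : ConvexOn ℝ Set.univ (fun ξ => Ψ ξ - ν * PsiPK N p κ ξ)) :
    StrictConvexOn ℝ Set.univ Ψ := by
  have hp0 : 0 < p := lt_trans one_pos hp
  have hsc : StrictConvexOn ℝ Set.univ (fun ξ : EuclideanSpace ℝ (Fin N) =>
      ν * PsiPK N p κ ξ) := by
    have hF := strictConvexOn_F (N := N) hp hκ
    have hc : 0 < ν * (1 / p) := by positivity
    refine ⟨convex_univ, fun x hx y hy hxy a b ha hb hab => ?_⟩
    have h := hF.2 hx hy hxy ha hb hab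
    simp only [smul_eq_mul, PsiPK] at h ⊢
    have e : a * (ν * (1 / p) * κ ^ p) + b * (ν * (1 / p) * κ ^ p) = ν * (1 / p) * κ ^ p := by
      rw [← add_mul, hab, one_mul]
    nlinarith [mul_lt_mul_of_pos_left h hc, e]
  have h2 : Ψ = (fun ξ => Ψ ξ - ν * PsiPK N p κ ξ) + (fun ξ => ν * PsiPK N p κ ξ) := by
    funext ξ
    simp
  rw [h2]
  exact hconv.add_strictConvexOn hsc
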